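/- Let C ≥ 1 and r ≥ 1/C be real numbers, and let f : ℂ × ℂ → ℂ be any map such that |f(t,z)| ≤ |z| + C(|t| + |z|²) whenever |t| ≤ r and |z| ≤ r. Write f_t := f(t,·) and let f_t^{[n]} denote its n-fold iterate. Then for every integer n ≥ 1 and all t, z ∈ ℂ with |t| ≤ 1/(4Cn)² and |z| ≤ 1/(16Cn), one has |f_t^{[n]}(z)| ≤ |z| + 4Cn(|t| + |z|²) ≤ 1/(Cn). -/

import Mathlib

set_option maxHeartbeats 1000000


/-- Quantitative estimate on iterates: if `|f(t,z)| ≤ |z| + C(|t|+|z|²)` for `|t|,|z| ≤ r`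
(with `C ≥ 1` and `r ≥ 1/C`), then for all `n ≥ 1`, `|t| ≤ 1/(4Cn)²` and `|z| ≤ 1/(16Cn)`
one has `|f_t^[n](z)| ≤ |z| + 4Cn(|t|+|z|²) ≤ 1/(Cn)`. -/
theorem stmt14 (C r : ℝ) (hC : 1 ≤ C) (hr : 1 / C ≤ r) (f : ℂ → ℂ → ℂ)
    (hf : ∀ t z : ℂ, ‖t‖ ≤ r → ‖z‖ ≤ r →
      ‖f t z‖ ≤ ‖z‖ + C * (‖t‖ + ‖z‖ ^ 2)) :
    ∀ n : ℕ, 1 ≤ n → ∀ t z : ℂ,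
      ‖t‖ ≤ 1 / (4 * C * (n : ℝ)) ^ 2 →
      ‖z‖ ≤ 1 / (16 * C * (n : ℝ)) →
      ‖(f t)^[n] z‖ ≤
          ‖z‖ + 4 * C * (n : ℝ) * (‖t‖ + ‖z‖ ^ 2) ∧
      ‖z‖ + 4 * C * (n : ℝ) * (‖t‖ + ‖z‖ ^ 2) ≤
          1 / (C * (n : ℝ)) := by
  intro n hn t z ht hz
  have hC0 : (0:ℝ) < C := lt_of_lt_of_le one_pos hC
  have hN1 : (1:ℝ) ≤ (n:ℝ) := by exact_mod_cast hn
  have hN0 : (0:ℝ) < (n:ℝ) := lt_of_lt_of_le one_pos hN1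
  have hCN0 : (0:ℝ) < C * n := mul_pos hC0 hN0
  have hA0 : 0 ≤ ‖z‖ := norm_nonneg z
  have hT0 : 0 ≤ ‖t‖ := norm_nonneg t
  set A := ‖z‖ with hA
  set T := ‖t‖ with hT
  clear_value A T
  -- multiplied-out hypotheses
  have h16 : (0:ℝ) < 16 * C ^ 2 * (n:ℝ) ^ 2 := by positivity
  have hT1 : T * (16 * C ^ 2 * (n:ℝ) ^ 2) ≤ 1 := by
    rw [← le_div_iff₀ h16]
    have h : (1:ℝ) / (4 * C * (n:ℝ)) ^ 2 = 1 / (16 * C ^ 2 * (n:ℝ) ^ 2) := by ring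
    linarith [ht, h ▸ ht]
  have hA1 : A * (16 * C * (n:ℝ)) ≤ 1 := by
    have h16' : (0:ℝ) < 16 * C * (n:ℝ) := by positivity
    rw [← le_div_iff₀ h16']
    exact hz
  -- the uniform bound B
  set B := A + 4 * C * (n:ℝ) * (T + A ^ 2) with hB
  clear_value B
  have hB0 : 0 ≤ B := by rw [hB]; positivity
  have hBmul : B * (C * n) ≤ 21 / 64 := by
    rw [hB]
    nlinarith [mul_le_mul_of_nonneg_right hA1 hA0,
      mul_le_mul hA1 hA1 (by positivity) (by norm_num : (0:ℝ) ≤ 1), sq_nonneg A, sq_nonneg T]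
  have hBle : B ≤ 1 / (C * n) := by
    rw [le_div_iff₀ hCN0]; linarith
  have hBr : B ≤ r := by
    have h1 : 1 / (C * (n:ℝ)) ≤ 1 / C := by
      apply one_div_le_one_div_of_le hC0; nlinarith
    linarith
  have hTr : T ≤ r := by
    have hc1 : (1:ℝ) ≤ 16 * C * (n:ℝ) ^ 2 := by nlinarith
    have hc2 : C ≤ 16 * C ^ 2 * (n:ℝ) ^ 2 := by nlinarith [mul_le_mul_of_nonneg_left hc1 hC0.le]
    have hTC : T * C ≤ 1 :=
      le_trans (mul_le_mul_of_nonneg_left hc2 hT0) hT1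
    have h3 : T ≤ 1 / C := by rw [le_div_iff₀ hC0]; exact hTC
    linarith
  -- B² ≤ 3T + 4A²
  have h4CNA : 4 * C * (n:ℝ) * A ≤ 1 / 4 := by linarith
  have hB2 : B ≤ (5/4) * A + 4 * C * (n:ℝ) * T := by
    rw [hB]; nlinarith [mul_le_mul_of_nonneg_right h4CNA hA0]
  have hBsq : B ^ 2 ≤ 3 * T + 4 * A ^ 2 := by
    nlinarith [sq_nonneg ((5/4) * A - 4 * C * (n:ℝ) * T),
      mul_le_mul_of_nonneg_left hT1 hT0, hB2, hB0, sq_nonneg A]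
  -- main induction
  have claim : ∀ k : ℕ, k ≤ n →
      ‖(f t)^[k] z‖ ≤ A + 4 * C * (k:ℝ) * (T + A ^ 2) := by
    intro k
    induction k with
    | zero => intro _; simp [← hA]
    | succ k ih =>
      intro hk
      have hk' : k ≤ n := Nat.le_of_succ_le hk
      have hkn : (k:ℝ) ≤ (n:ℝ) := by exact_mod_cast hk'
      have hw := ih hk'
      set W := ‖(f t)^[k] z‖ with hW
      have hW0 : 0 ≤ W := norm_nonneg _
      have hWB : W ≤ B := by
        rw [hB]
        nlinarith [mul_le_mul_of_nonneg_left hkn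
          (show (0:ℝ) ≤ 4 * C * (T + A ^ 2) by positivity)]
      have hWr : W ≤ r := le_trans hWB hBr
      have hstep := hf t ((f t)^[k] z) (hT ▸ hTr) hWr
      rw [← hW] at hstep
      rw [Function.iterate_succ_apply']
      have hWsq : W ^ 2 ≤ 3 * T + 4 * A ^ 2 := by
        calc W ^ 2 ≤ B ^ 2 := by nlinarith
        _ ≤ 3 * T + 4 * A ^ 2 := hBsq
      have h2 : C * (T + W ^ 2) ≤ C * (4 * (T + A ^ 2)) := by
        apply mul_le_mul_of_nonneg_left _ hC0.le
        linarith
      push_cast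
      rw [← hT] at hstep
      linarith [hstep, hw, h2]
  refine ⟨?_, hBle⟩
  rw [hB]
  exact claim n le_rfl
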